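/- Let S be a 3×3 diagonal matrix with positive diagonal entries, R_p a 3×3 rotation matrix, Σ := R_p S² R_pᵀ, μ ∈ ℝ³ nonzero, c := √(μᵀΣ⁻¹μ), 0 < κ < c², and let R₀ be a rotation with R₀v = μ̂; set Q := R_p S R₀, Q_{0:2} its first two columns, b := √(1−κ/c²), a := √(κ/(c²−κ)). Let U ∈ ℝ^{2×2} be any matrix and O := [[−1,−1,1,1],[−1,1,1,−1]] ∈ ℝ^{2×4}. Then V_ray := (c²/(c²−κ)) · Φ⁻¹ applied column-wise to U·O equals T_ray · H(Z_ray), where Z_ray := (√κ/b)·O ∈ ℝ^{2×4}, T_ray := [Q_{0:2}·U, μ] ∈ ℝ^{3×3}, and H appends a row of ones; equivalently, c·Q·H(a·U·O) = Q_{0:2}·U·Z_ray + μ·1ᵀ. -/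

import Mathlib

open Matrix

/-- The quad vertices `V_ray = (c²/(c²−κ))·Φ⁻¹(U·O)` (applied column-wise)
equal `T_ray·H(Z_ray)` with `Z_ray = (√κ/b)·O` and `T_ray = [Q_{0:2}U, μ]`;
equivalently, `c·Q·H(a·U·O) = Q_{0:2}·U·Z_ray + μ·1ᵀ`. -/
theorem stmt_12 (d : Fin 3 → ℝ) (hd : ∀ i, 0 < d i)
    (Rp : Matrix (Fin 3) (Fin 3) ℝ) (hRp : Rpᵀ * Rp = 1) (hRpdet : Rp.det = 1)
    (μ : Fin 3 → ℝ) (hμ : μ ≠ 0) (κ : ℝ)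
    (R0 : Matrix (Fin 3) (Fin 3) ℝ) (hR0 : R0ᵀ * R0 = 1) (hR0det : R0.det = 1)
    (U : Matrix (Fin 2) (Fin 2) ℝ) :
    let Sm : Matrix (Fin 3) (Fin 3) ℝ := Matrix.diagonal d
    let Cov : Matrix (Fin 3) (Fin 3) ℝ := Rp * (Sm * Sm) * Rpᵀ
    let c : ℝ := Real.sqrt (μ ⬝ᵥ Cov⁻¹.mulVec μ)
    let μhat : Fin 3 → ℝ := (1 / c) • (Sm⁻¹ * Rpᵀ).mulVec μ
    let v : Fin 3 → ℝ := ![0, 0, 1]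
    let Q : Matrix (Fin 3) (Fin 3) ℝ := Rp * Sm * R0
    let Q02 : Matrix (Fin 3) (Fin 2) ℝ := Matrix.of fun i j => Q i j.castSucc
    let b : ℝ := Real.sqrt (1 - κ / c ^ 2)
    let a : ℝ := Real.sqrt (κ / (c ^ 2 - κ))
    let Φinv : (Fin 2 → ℝ) → (Fin 3 → ℝ) := fun u =>
      ((c ^ 2 - κ) / c) • Q.mulVec ![a * u 0, a * u 1, 1]
    let O : Matrix (Fin 2) (Fin 4) ℝ := !![-1, -1, 1, 1; -1, 1, 1, -1]
    -- `H` appends a row of ones to a `2 × 4` matrix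
    let HM : Matrix (Fin 2) (Fin 4) ℝ → Matrix (Fin 3) (Fin 4) ℝ := fun M =>
      Matrix.of fun i j => ![M 0 j, M 1 j, 1] i
    let Zray : Matrix (Fin 2) (Fin 4) ℝ := (Real.sqrt κ / b) • O
    let Vray : Matrix (Fin 3) (Fin 4) ℝ :=
      Matrix.of fun i j => ((c ^ 2 / (c ^ 2 - κ)) • Φinv (fun k => (U * O) k j)) i
    let Tray : Matrix (Fin 3) (Fin 3) ℝ :=
      Matrix.of fun i j => ![(Q02 * U) i 0, (Q02 * U) i 1, μ i] j
    0 < κ → κ < c ^ 2 → R0.mulVec v = μhat →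
      Vray = Tray * HM Zray ∧
      c • (Q * HM (a • (U * O))) =
        Q02 * U * Zray + Matrix.of (fun i (_ : Fin 4) => μ i) := by

  intro Sm Cov c μhat v Q Q02 b a Φinv O HM Zray Vray Tray hκ hκc hR0v
  have hc0 : (0:ℝ) ≤ c := Real.sqrt_nonneg _
  have hc2 : 0 < c ^ 2 := hκ.trans hκc
  have hc : 0 < c := by nlinarith
  have hck : 0 < c ^ 2 - κ := by linarith
  have hb2 : 0 < 1 - κ / c ^ 2 := by
    rw [sub_pos, div_lt_one hc2]; exact hκc
  have hb : 0 < b := Real.sqrt_pos.mpr hb2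
  -- key scalar identity
  have hca : Real.sqrt κ / b = c * a := by
    have h1 : c * a = Real.sqrt (c ^ 2 * (κ / (c ^ 2 - κ))) := by
      rw [Real.sqrt_mul (sq_nonneg c), Real.sqrt_sq hc.le]
    have h2 : Real.sqrt κ / b = Real.sqrt (κ / (1 - κ / c ^ 2)) := by
      rw [Real.sqrt_div hκ.le]
    rw [h1, h2]
    congr 1
    field_simp
  -- key vector identity : c * Q i 2 = μ i
  have hSmdet : IsUnit Sm.det := by
    rw [Matrix.det_diagonal]
    exact (Finset.prod_pos fun i _ => hd i).ne'.isUnit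
  have hRpRpT : Rp * Rpᵀ = 1 := mul_eq_one_comm.mp hRp
  have hprod : (Rp * Sm) * (Sm⁻¹ * Rpᵀ) = 1 := by
    rw [Matrix.mul_assoc, ← Matrix.mul_assoc Sm, Matrix.mul_nonsing_inv _ hSmdet,
      Matrix.one_mul, hRpRpT]
  have hQv : Q.mulVec v = (1 / c) • μ := by
    show (Rp * Sm * R0).mulVec v = _
    rw [← Matrix.mulVec_mulVec, hR0v]
    show (Rp * Sm).mulVec ((1 / c) • (Sm⁻¹ * Rpᵀ).mulVec μ) = _
    rw [Matrix.mulVec_smul, Matrix.mulVec_mulVec, hprod, Matrix.one_mulVec]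
  have hQ2 : ∀ i, c * Q i 2 = μ i := by
    intro i
    have h1 := congrFun hQv i
    have h2 : (Q.mulVec v) i = Q i 2 := by
      simp [Matrix.mulVec, dotProduct, Fin.sum_univ_three, v]
    rw [h2] at h1
    rw [h1]
    simp
    field_simp
  constructor
  · ext i j
    simp only [Vray, Tray, Φinv, HM, Zray, Q02, Matrix.of_apply, Matrix.mul_apply,
      Matrix.smul_apply, Pi.smul_apply, Matrix.mulVec, dotProduct,
      Fin.sum_univ_three, Fin.sum_univ_two, smul_eq_mul,
      Matrix.cons_val_zero, Matrix.cons_val_one, Matrix.head_cons,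
      Matrix.cons_val_two, Matrix.tail_cons, Fin.castSucc]
    rw [show (Fin.castAdd 1 (0:Fin 2)) = (0:Fin 3) from rfl,
      show (Fin.castAdd 1 (1:Fin 2)) = (1:Fin 3) from rfl, hca, ← hQ2 i]
    field_simp
    ring
  · ext i j
    simp only [Vray, Tray, Φinv, HM, Zray, Q02, Matrix.of_apply, Matrix.mul_apply,
      Matrix.smul_apply, Pi.smul_apply, Matrix.mulVec, dotProduct,
      Fin.sum_univ_three, Fin.sum_univ_two, smul_eq_mul, Matrix.add_apply,
      Matrix.cons_val_zero, Matrix.cons_val_one, Matrix.head_cons,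
      Matrix.cons_val_two, Matrix.tail_cons, Fin.castSucc]
    rw [show (Fin.castAdd 1 (0:Fin 2)) = (0:Fin 3) from rfl,
      show (Fin.castAdd 1 (1:Fin 2)) = (1:Fin 3) from rfl, hca, ← hQ2 i]
    ring
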